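/- Let f be a real polynomial of degree 2p-1 with p \ge 2. For every \delta with 0 < \delta < 1, there exists C > 0 such that for all real x, y: |f(x) - f(y) - f'(y)(x - y)| \le C (|x| + |y| + 1)^{2p-2-\delta} |x - y|^{1+\delta}. -/

import Mathlib

open Finset

lemma aux_pow_sub (x y : ℝ) (i : ℕ) :
    |x ^ i - y ^ i| ≤ i * (|x| + |y| + 1) ^ (i - 1) * |x - y| := by
  set s := |x| + |y| + 1 with hs
  have hx0 := abs_nonneg x
  have hy0 := abs_nonneg y
  have hs1 : (1:ℝ) ≤ s := by simp [hs]; linarith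
  have hx : |x| ≤ s := by simp [hs]; linarith
  have hy : |y| ≤ s := by simp [hs]; linarith
  rw [← geom_sum₂_mul x y i, abs_mul]
  have hsum : |∑ j ∈ range i, x ^ j * y ^ (i - 1 - j)| ≤ i * s ^ (i - 1) := by
    calc |∑ j ∈ range i, x ^ j * y ^ (i - 1 - j)|
        ≤ ∑ j ∈ range i, |x ^ j * y ^ (i - 1 - j)| := Finset.abs_sum_le_sum_abs _ _
      _ ≤ ∑ _j ∈ range i, s ^ (i - 1) := by
          refine Finset.sum_le_sum fun j hj => ?_
          rw [abs_mul, abs_pow, abs_pow]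
          have hj' : j < i := Finset.mem_range.mp hj
          calc |x| ^ j * |y| ^ (i - 1 - j) ≤ s ^ j * s ^ (i - 1 - j) := by gcongr
            _ = s ^ (j + (i - 1 - j)) := (pow_add s j _).symm
            _ = s ^ (i - 1) := by congr 1; omega
      _ = i * s ^ (i - 1) := by simp [Finset.sum_const, nsmul_eq_mul]
  exact mul_le_mul_of_nonneg_right hsum (abs_nonneg _)

lemma aux_taylor (x y : ℝ) (k : ℕ) :
    |x ^ k - y ^ k - k * y ^ (k - 1) * (x - y)| ≤
      k ^ 2 * (|x| + |y| + 1) ^ (k - 2) * |x - y| ^ 2 := by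
  set s := |x| + |y| + 1 with hs
  have hx0 := abs_nonneg x
  have hy0 := abs_nonneg y
  have hs1 : (1:ℝ) ≤ s := by simp [hs]; linarith
  have hy : |y| ≤ s := by simp [hs]; linarith
  have key : x ^ k - y ^ k - (k:ℝ) * y ^ (k - 1) * (x - y)
      = (∑ i ∈ range k, (x ^ i * y ^ (k - 1 - i) - y ^ (k - 1))) * (x - y) := by
    rw [Finset.sum_sub_distrib, sub_mul, geom_sum₂_mul]
    simp [Finset.sum_const, nsmul_eq_mul]
  rw [key, abs_mul]
  have hsum : |∑ i ∈ range k, (x ^ i * y ^ (k - 1 - i) - y ^ (k - 1))|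
      ≤ k ^ 2 * s ^ (k - 2) * |x - y| := by
    calc |∑ i ∈ range k, (x ^ i * y ^ (k - 1 - i) - y ^ (k - 1))|
        ≤ ∑ i ∈ range k, |x ^ i * y ^ (k - 1 - i) - y ^ (k - 1)| :=
          Finset.abs_sum_le_sum_abs _ _
      _ ≤ ∑ _i ∈ range k, (k * s ^ (k - 2) * |x - y|) := by
          refine Finset.sum_le_sum fun i hi => ?_
          have hik : i < k := Finset.mem_range.mp hi
          rcases Nat.eq_zero_or_pos i with hi0 | hi1
          · subst hi0
            simp only [pow_zero, one_mul, Nat.sub_zero, sub_self, abs_zero]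
            positivity
          · have hfac : x ^ i * y ^ (k - 1 - i) - y ^ (k - 1)
                = y ^ (k - 1 - i) * (x ^ i - y ^ i) := by
              have h1 : k - 1 - i + i = k - 1 := by omega
              calc x ^ i * y ^ (k - 1 - i) - y ^ (k - 1)
                  = y ^ (k - 1 - i) * x ^ i - y ^ (k - 1 - i) * y ^ i := by
                    rw [← pow_add, h1]; ring
                _ = y ^ (k - 1 - i) * (x ^ i - y ^ i) := by ring
            rw [hfac, abs_mul, abs_pow]
            calc |y| ^ (k - 1 - i) * |x ^ i - y ^ i|
                ≤ s ^ (k - 1 - i) * (i * s ^ (i - 1) * |x - y|) := by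
                  refine mul_le_mul ?_ (aux_pow_sub x y i) (abs_nonneg _) (by positivity)
                  gcongr
              _ = i * (s ^ (k - 1 - i) * s ^ (i - 1)) * |x - y| := by ring
              _ = i * s ^ (k - 2) * |x - y| := by
                  rw [← pow_add, show k - 1 - i + (i - 1) = k - 2 from by omega]
              _ ≤ k * s ^ (k - 2) * |x - y| := by
                  gcongr
      _ = k ^ 2 * s ^ (k - 2) * |x - y| := by
          simp [Finset.sum_const, nsmul_eq_mul]
          ring
  calc |∑ i ∈ range k, (x ^ i * y ^ (k - 1 - i) - y ^ (k - 1))| * |x - y|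
      ≤ (k ^ 2 * s ^ (k - 2) * |x - y|) * |x - y| :=
        mul_le_mul_of_nonneg_right hsum (abs_nonneg _)
    _ = k ^ 2 * s ^ (k - 2) * |x - y| ^ 2 := by ring

theorem statement5 (p : ℕ) (hp : 2 ≤ p) (a : ℕ → ℝ) (δ : ℝ) (hδ0 : 0 < δ) (hδ1 : δ < 1) :
    ∃ C > 0, ∀ x y : ℝ,
      |(∑ k ∈ Finset.Icc 1 (2*p-1), a k * x ^ k) -
        (∑ k ∈ Finset.Icc 1 (2*p-1), a k * y ^ k) -
        (∑ k ∈ Finset.Icc 1 (2*p-1), a k * k * y ^ (k-1)) * (x - y)| ≤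
        C * (|x| + |y| + 1) ^ ((2*p : ℝ) - 2 - δ) * |x - y| ^ ((1:ℝ) + δ) := by
  set C : ℝ := (∑ k ∈ Finset.Icc 1 (2*p-1), |a k| * (k:ℝ) ^ 2) + 1 with hC
  have hCpos : 0 < C := by
    have : 0 ≤ ∑ k ∈ Finset.Icc 1 (2*p-1), |a k| * (k:ℝ) ^ 2 :=
      Finset.sum_nonneg fun k _ => by positivity
    linarith
  refine ⟨C, hCpos, fun x y => ?_⟩
  set s := |x| + |y| + 1 with hs
  set d := |x - y| with hd
  have hx0 := abs_nonneg x
  have hy0 := abs_nonneg y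
  have hs1 : (1:ℝ) ≤ s := by simp [hs]; linarith
  have hs0 : (0:ℝ) < s := by linarith
  have hd0 : (0:ℝ) ≤ d := abs_nonneg _
  have hds : d ≤ s := by
    have := abs_sub_abs_le_abs_sub x y
    have h2 : |x - y| ≤ |x| + |y| := abs_sub x y
    simp only [hd, hs]; linarith
  -- key exponent comparison
  have hkey : ∀ k ∈ Finset.Icc 1 (2*p-1),
      s ^ (k - 2) * d ^ 2 ≤ s ^ ((2*p : ℝ) - 2 - δ) * d ^ ((1:ℝ) + δ) := by
    intro k hk
    obtain ⟨hk1, hk2⟩ := Finset.mem_Icc.mp hk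
    rcases eq_or_lt_of_le hd0 with hdz | hdpos
    · rw [← hdz]
      have : (0:ℝ) ^ ((1:ℝ) + δ) = 0 := Real.zero_rpow (by linarith)
      simp [this]
    · have hd2 : d ^ 2 = d ^ ((1:ℝ) + δ) * d ^ ((1:ℝ) - δ) := by
        rw [← Real.rpow_add hdpos, show (1:ℝ) + δ + (1 - δ) = ((2:ℕ):ℝ) by ring,
          Real.rpow_natCast]
      have hsnat : s ^ (k - 2) = s ^ (((k - 2 : ℕ) : ℝ)) := (Real.rpow_natCast s _).symm
      rw [hd2, hsnat]
      have hdd : d ^ ((1:ℝ) - δ) ≤ s ^ ((1:ℝ) - δ) :=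
        Real.rpow_le_rpow hd0 hds (by linarith)
      have hexp : ((k - 2 : ℕ) : ℝ) + ((1:ℝ) - δ) ≤ (2*p : ℝ) - 2 - δ := by
        have h3 : (k - 2 : ℕ) + 3 ≤ 2 * p := by omega
        have h3' : ((k - 2 : ℕ) : ℝ) + 3 ≤ 2 * (p:ℝ) := by exact_mod_cast h3
        linarith
      calc s ^ (((k - 2 : ℕ) : ℝ)) * (d ^ ((1:ℝ) + δ) * d ^ ((1:ℝ) - δ))
          ≤ s ^ (((k - 2 : ℕ) : ℝ)) * (d ^ ((1:ℝ) + δ) * s ^ ((1:ℝ) - δ)) := by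
            have h1 : 0 ≤ s ^ (((k - 2 : ℕ) : ℝ)) := Real.rpow_nonneg hs0.le _
            have h2 : 0 ≤ d ^ ((1:ℝ) + δ) := Real.rpow_nonneg hd0 _
            nlinarith [mul_le_mul_of_nonneg_left hdd h2]
        _ = s ^ (((k - 2 : ℕ) : ℝ) + ((1:ℝ) - δ)) * d ^ ((1:ℝ) + δ) := by
            rw [Real.rpow_add hs0]; ring
        _ ≤ s ^ ((2*p : ℝ) - 2 - δ) * d ^ ((1:ℝ) + δ) := by
            have := Real.rpow_le_rpow_of_exponent_le hs1 hexp
            exact mul_le_mul_of_nonneg_right this (Real.rpow_nonneg hd0 _)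
  have hre : (∑ k ∈ Finset.Icc 1 (2*p-1), a k * x ^ k) -
        (∑ k ∈ Finset.Icc 1 (2*p-1), a k * y ^ k) -
        (∑ k ∈ Finset.Icc 1 (2*p-1), a k * k * y ^ (k-1)) * (x - y)
      = ∑ k ∈ Finset.Icc 1 (2*p-1),
          a k * (x ^ k - y ^ k - k * y ^ (k-1) * (x - y)) := by
    rw [Finset.sum_mul, ← Finset.sum_sub_distrib, ← Finset.sum_sub_distrib]
    exact Finset.sum_congr rfl fun k _ => by ring
  rw [hre]
  calc |∑ k ∈ Finset.Icc 1 (2*p-1), a k * (x ^ k - y ^ k - k * y ^ (k-1) * (x - y))|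
      ≤ ∑ k ∈ Finset.Icc 1 (2*p-1), |a k * (x ^ k - y ^ k - k * y ^ (k-1) * (x - y))| :=
        Finset.abs_sum_le_sum_abs _ _
    _ ≤ ∑ k ∈ Finset.Icc 1 (2*p-1),
          |a k| * (k ^ 2 * (s ^ ((2*p : ℝ) - 2 - δ) * d ^ ((1:ℝ) + δ))) := by
        refine Finset.sum_le_sum fun k hk => ?_
        rw [abs_mul]
        refine mul_le_mul_of_nonneg_left ?_ (abs_nonneg _)
        calc |x ^ k - y ^ k - ↑k * y ^ (k-1) * (x - y)|
            ≤ (k:ℝ) ^ 2 * s ^ (k - 2) * d ^ 2 := aux_taylor x y k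
          _ = (k:ℝ) ^ 2 * (s ^ (k - 2) * d ^ 2) := by ring
          _ ≤ (k:ℝ) ^ 2 * (s ^ ((2*p : ℝ) - 2 - δ) * d ^ ((1:ℝ) + δ)) := by
              exact mul_le_mul_of_nonneg_left (hkey k hk) (by positivity)
    _ = (∑ k ∈ Finset.Icc 1 (2*p-1), |a k| * (k:ℝ) ^ 2) *
          (s ^ ((2*p : ℝ) - 2 - δ) * d ^ ((1:ℝ) + δ)) := by
        rw [Finset.sum_mul]
        exact Finset.sum_congr rfl fun k _ => by ring
    _ ≤ C * (s ^ ((2*p : ℝ) - 2 - δ) * d ^ ((1:ℝ) + δ)) := by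
        have h1 : 0 ≤ s ^ ((2*p : ℝ) - 2 - δ) * d ^ ((1:ℝ) + δ) := by
          have := Real.rpow_nonneg hs0.le ((2*p : ℝ) - 2 - δ)
          have := Real.rpow_nonneg hd0 ((1:ℝ) + δ)
          positivity
        refine mul_le_mul_of_nonneg_right ?_ h1
        simp only [hC]
        linarith
    _ = C * s ^ ((2*p : ℝ) - 2 - δ) * d ^ ((1:ℝ) + δ) := by ring
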